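/- Let S be a cancellative monoid and let ℓ₁(S) be the semigroup Banach algebra of S (over ℝ or ℂ) with convolution product. If the set of invertible elements of ℓ₁(S) is dense in ℓ₁(S), then S is a group. Consequently, if S is a cancellative monoid that is not a group, then multiplication (convolution) in ℓ₁(S) is not open. -/

import Mathlib

open scoped ENNReal

/-- The convolution of two elements of `ℓ₁(S)` is again in `ℓ₁(S)`. -/
theorem l1Conv_memℓp {S : Type*} [Monoid S] {𝕜 : Type*} [RCLike 𝕜]
    (x y : lp (fun _ : S => 𝕜) 1) :
    Memℓp (fun t : S => ∑' p : {p : S × S // p.1 * p.2 = t}, x p.val.1 * y p.val.2) 1 := by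
  have hone : (0:ℝ) < (1 : ℝ≥0∞).toReal := by simp
  have hx : Summable fun r : S => ‖x r‖ := by
    have := (memℓp_gen_iff hone).1 (lp.memℓp x); simpa using this
  have hy : Summable fun s : S => ‖y s‖ := by
    have := (memℓp_gen_iff hone).1 (lp.memℓp y); simpa using this
  have hxy : Summable fun p : S × S => ‖x p.1 * y p.2‖ := hx.mul_norm hy
  have hsig : Summable fun q : Σ t : S, {p : S × S // p.1 * p.2 = t} =>
      ‖x q.2.val.1 * y q.2.val.2‖ :=
    ((Equiv.sigmaFiberEquiv (fun p : S × S => p.1 * p.2)).summable_iff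
      (f := fun p : S × S => ‖x p.1 * y p.2‖)).2 hxy
  have hsum : Summable fun t : S =>
      ∑' p : {p : S × S // p.1 * p.2 = t}, ‖x p.val.1 * y p.val.2‖ := hsig.sigma
  apply memℓp_gen
  simp only [ENNReal.toReal_one, Real.rpow_one]
  refine Summable.of_nonneg_of_le (fun t => norm_nonneg _) (fun t => ?_) hsum
  exact norm_tsum_le_tsum_norm (hsig.sigma_factor t)

/-- The convolution product on `ℓ₁(S)` for a (multiplicative) monoid `S`:
`(x ∗ y)(t) = ∑_{r·s = t} x(r) y(s)`. -/
noncomputable def l1Conv {S : Type*} [Monoid S] {𝕜 : Type*} [RCLike 𝕜]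
    (x y : lp (fun _ : S => 𝕜) 1) : lp (fun _ : S => 𝕜) 1 :=
  ⟨fun t => ∑' p : {p : S × S // p.1 * p.2 = t}, x p.val.1 * y p.val.2, l1Conv_memℓp x y⟩

/-- The identity of `ℓ₁(S)`: the indicator of the neutral element of the monoid `S`. -/
noncomputable def l1One (S : Type*) [Monoid S] (𝕜 : Type*) [RCLike 𝕜] :
    lp (fun _ : S => 𝕜) 1 :=
  letI := Classical.decEq S
  lp.single 1 (1 : S) (1 : 𝕜)


open scoped ENNReal

section Aux

variable {𝕜 : Type*} [RCLike 𝕜] {S : Type*}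

lemma l1_summable_norm [Monoid S] (x : lp (fun _ : S => 𝕜) 1) :
    Summable fun t : S => ‖x t‖ := by
  have hone : (0:ℝ) < (1 : ℝ≥0∞).toReal := by simp
  have := (memℓp_gen_iff hone).1 (lp.memℓp x); simpa using this

lemma l1_norm_eq_tsum [Monoid S] (x : lp (fun _ : S => 𝕜) 1) :
    ‖x‖ = ∑' t : S, ‖x t‖ := by
  have h := lp.norm_eq_tsum_rpow (p := 1) (by simp) x
  simpa using h

/-- Dirac delta at `s`. -/
noncomputable def l1Delta (S : Type*) [Monoid S] (𝕜 : Type*) [RCLike 𝕜] (s : S) :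
    lp (fun _ : S => 𝕜) 1 :=
  letI := Classical.decEq S
  lp.single 1 s (1 : 𝕜)

lemma l1Delta_apply_self [Monoid S] (s : S) : l1Delta S 𝕜 s s = 1 := by
  letI := Classical.decEq S
  exact lp.single_apply_self (E := fun _ : S => 𝕜) 1 s 1

lemma l1Delta_apply_ne [Monoid S] (s : S) {t : S} (h : t ≠ s) : l1Delta S 𝕜 s t = 0 := by
  letI := Classical.decEq S
  exact lp.single_apply_ne (E := fun _ : S => 𝕜) 1 s 1 h

lemma l1One_eq_delta [Monoid S] : l1One S 𝕜 = l1Delta S 𝕜 1 := rfl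

lemma l1Conv_apply [Monoid S] (x y : lp (fun _ : S => 𝕜) 1) (t : S) :
    l1Conv x y t = ∑' p : {p : S × S // p.1 * p.2 = t}, x p.val.1 * y p.val.2 := rfl

lemma tsum_prod_mul {α β : Type*} {f : α → ℝ} {g : β → ℝ}
    (hf : Summable fun a => ‖f a‖) (hg : Summable fun b => ‖g b‖) :
    ∑' pq : α × β, f pq.1 * g pq.2 = (∑' a, f a) * (∑' b, g b) :=
  (tsum_mul_tsum_of_summable_norm hf hg).symm

/-- `c` times the Dirac delta at the identity. -/
noncomputable def l1Sc (S : Type*) [Monoid S] (𝕜 : Type*) [RCLike 𝕜] (c : 𝕜) :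
    lp (fun _ : S => 𝕜) 1 :=
  letI := Classical.decEq S
  lp.single 1 (1 : S) c

lemma l1Sc_apply_self [Monoid S] (c : 𝕜) : l1Sc S 𝕜 c 1 = c := by
  letI := Classical.decEq S
  exact lp.single_apply_self (E := fun _ : S => 𝕜) 1 (1 : S) c

lemma l1Sc_apply_ne [Monoid S] (c : 𝕜) {t : S} (h : t ≠ 1) : l1Sc S 𝕜 c t = 0 := by
  letI := Classical.decEq S
  exact lp.single_apply_ne (E := fun _ : S => 𝕜) 1 (1 : S) c h

lemma l1Sc_one [Monoid S] : l1Sc S 𝕜 1 = l1One S 𝕜 := rfl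

lemma l1Sc_norm [Monoid S] (c : 𝕜) : ‖l1Sc S 𝕜 c‖ = ‖c‖ := by
  letI := Classical.decEq S
  exact lp.norm_single (E := fun _ : S => 𝕜) (p := 1) (by simp) (1 : S) c

end Aux

set_option maxHeartbeats 1000000 in
lemma l1_keyLemma {𝕜 : Type*} [RCLike 𝕜] {S : Type*} [CancelMonoid S]
    {s : S} (hs : ¬ IsUnit s) {x y : lp (fun _ : S => 𝕜) 1} {c : 𝕜} (hc : c ≠ 0)
    (hxy : l1Conv x y = l1Sc S 𝕜 c)
    (hlt : ‖x - l1Delta S 𝕜 s‖ < 1/2) : False := by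
  classical
  set d : lp (fun _ : S => 𝕜) 1 := l1Delta S 𝕜 s with hd
  have hsq : ∀ q : S, s * q ≠ 1 := by
    intro q h
    apply hs
    have h2 : q * s = 1 := by
      have h3 : (q * s) * q = 1 * q := by rw [mul_assoc, h, mul_one, one_mul]
      exact mul_right_cancel h3
    exact ⟨⟨s, q, h, h2⟩, rfl⟩
  have hxs := l1_summable_norm x
  have hys := l1_summable_norm y
  have hds := l1_summable_norm (x - d)
  have hprod : Summable fun pq : S × S => ‖x pq.1‖ * ‖y pq.2‖ :=
    hxs.mul_of_nonneg hys (fun _ => norm_nonneg _) (fun _ => norm_nonneg _)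
  have hg : Summable fun pq : S × S => ‖(x - d) pq.1‖ * ‖y pq.2‖ :=
    hds.mul_of_nonneg hys (fun _ => norm_nonneg _) (fun _ => norm_nonneg _)
  have hsub : ∀ t : S, (x - d) t = x t - d t := by
    intro t; rw [lp.coeFn_sub]; rfl
  have hxdiff : ∀ t : S, t ≠ s → (x - d) t = x t := by
    intro t ht; rw [hsub, l1Delta_apply_ne s ht, sub_zero]
  have h1 : (1:ℝ) - ‖x - d‖ ≤ ‖x s‖ := by
    have h2 : ‖(x - d) s‖ ≤ ‖x - d‖ := lp.norm_apply_le_norm one_ne_zero (x - d) s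
    have h3 : (x - d) s = x s - 1 := by rw [hsub, hd, l1Delta_apply_self]
    have h4 : ‖(1:𝕜)‖ - ‖x s‖ ≤ ‖(1:𝕜) - x s‖ := norm_sub_norm_le _ _
    rw [norm_sub_rev] at h4
    rw [h3] at h2
    simp only [norm_one] at h4
    linarith
  -- the sigma-indexed comparison function
  set H : (Σ q : S, {pp : S × S // pp.1 * pp.2 = s * q}) → ℝ :=
    fun a => if a.2.val.1 = s then 0 else ‖x a.2.val.1‖ * ‖y a.2.val.2‖ with hH
  set i : (Σ q : S, {pp : S × S // pp.1 * pp.2 = s * q}) → S × S :=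
    fun a => a.2.val with hi_def
  have hi : Function.Injective i := by
    rintro ⟨q, ⟨pp, hpp⟩⟩ ⟨q', ⟨pp', hpp'⟩⟩ h
    simp only [hi_def] at h
    subst h
    obtain rfl : q = q' := mul_left_cancel (hpp.symm.trans hpp')
    rfl
  have Hnn : ∀ a, 0 ≤ H a := by
    intro a; rw [hH]; dsimp only; split
    · exact le_rfl
    · positivity
  have HleG : ∀ a, H a ≤ ‖(x - d) (i a).1‖ * ‖y (i a).2‖ := by
    intro a; rw [hH, hi_def]; dsimp only; split
    · positivity
    · rw [hxdiff _ (by assumption)]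
  have hHsum : Summable H :=
    Summable.of_nonneg_of_le Hnn HleG (hg.comp_injective hi)
  have hHq : ∀ q : S, Summable fun pp : {pp : S × S // pp.1 * pp.2 = s * q} => H ⟨q, pp⟩ :=
    fun q => hHsum.sigma_factor q
  have htsum_le : ∑' a, H a ≤ ‖x - d‖ * ‖y‖ := by
    have ha : ∑' a, H a ≤ ∑' pq : S × S, ‖(x - d) pq.1‖ * ‖y pq.2‖ :=
      hHsum.tsum_le_tsum_of_inj i hi (fun p _ => mul_nonneg (norm_nonneg _) (norm_nonneg _))
        HleG hg
    have hb : ∑' pq : S × S, ‖(x - d) pq.1‖ * ‖y pq.2‖ = ‖x - d‖ * ‖y‖ := by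
      have hpm := tsum_prod_mul (f := fun t : S => ‖(x - d) t‖) (g := fun t : S => ‖y t‖)
        (by simpa only [norm_norm] using hds) (by simpa only [norm_norm] using hys)
      rw [← l1_norm_eq_tsum, ← l1_norm_eq_tsum] at hpm
      exact hpm
    linarith
  have hfib : ∀ t : S, Summable fun pp : {pp : S × S // pp.1 * pp.2 = t} =>
      ‖x pp.val.1‖ * ‖y pp.val.2‖ :=
    fun t => hprod.comp_injective Subtype.val_injective
  have hfib' : ∀ t : S, Summable fun pp : {pp : S × S // pp.1 * pp.2 = t} =>
      ‖x pp.val.1 * y pp.val.2‖ := by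
    intro t; simp only [norm_mul]; exact hfib t
  have hkey : ∀ q : S, ‖x s‖ * ‖y q‖ ≤
      ∑' pp : {pp : S × S // pp.1 * pp.2 = s * q}, H ⟨q, pp⟩ := by
    intro q
    set b : {pp : S × S // pp.1 * pp.2 = s * q} := ⟨(s, q), rfl⟩ with hb
    have hcoef : ∑' pp : {pp : S × S // pp.1 * pp.2 = s * q}, x pp.val.1 * y pp.val.2
        = 0 := by
      have happ := congrArg (fun w : lp (fun _ : S => 𝕜) 1 => w (s * q)) hxy
      simp only at happ
      rw [l1Conv_apply] at happ
      rw [happ, l1Sc_apply_ne c (hsq q)]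
    have hfsum : Summable fun pp : {pp : S × S // pp.1 * pp.2 = s * q} =>
        x pp.val.1 * y pp.val.2 := (hfib' (s * q)).of_norm
    have hsplit := Summable.tsum_eq_add_tsum_ite hfsum b
    rw [hcoef] at hsplit
    have hR : x s * y q = - ∑' pp, ite (pp = b) 0 (x pp.val.1 * y pp.val.2) :=
      eq_neg_of_add_eq_zero_left hsplit.symm
    have hite_sum : Summable fun pp : {pp : S × S // pp.1 * pp.2 = s * q} =>
        ‖ite (pp = b) (0:𝕜) (x pp.val.1 * y pp.val.2)‖ := by
      refine Summable.of_nonneg_of_le (fun _ => norm_nonneg _) (fun pp => ?_) (hfib' (s * q))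
      by_cases hpb : pp = b
      · rw [if_pos hpb, norm_zero]; exact norm_nonneg _
      · rw [if_neg hpb]
    have hptwise : ∀ pp : {pp : S × S // pp.1 * pp.2 = s * q},
        ‖ite (pp = b) (0:𝕜) (x pp.val.1 * y pp.val.2)‖ ≤ H ⟨q, pp⟩ := by
      intro pp
      by_cases hpb : pp = b
      · subst hpb
        rw [if_pos rfl, norm_zero, hH]
        dsimp only
        rw [if_pos rfl]
      · rw [if_neg hpb]
        have hps : pp.val.1 ≠ s := by
          intro h1
          apply hpb
          have h2 := pp.prop
          rw [h1] at h2
          have h3 : pp.val.2 = q := mul_left_cancel h2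
          apply Subtype.ext
          exact Prod.ext h1 h3
        rw [hH]; dsimp only
        rw [if_neg hps, norm_mul]
    have hcalc : ‖x s * y q‖ ≤ ∑' pp, H ⟨q, pp⟩ := by
      rw [hR, norm_neg]
      calc ‖∑' pp, ite (pp = b) (0:𝕜) (x pp.val.1 * y pp.val.2)‖
          ≤ ∑' pp, ‖ite (pp = b) (0:𝕜) (x pp.val.1 * y pp.val.2)‖ :=
            norm_tsum_le_tsum_norm hite_sum
        _ ≤ ∑' pp, H ⟨q, pp⟩ := Summable.tsum_le_tsum hptwise hite_sum (hHq q)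
    calc ‖x s‖ * ‖y q‖ = ‖x s * y q‖ := (norm_mul _ _).symm
      _ ≤ ∑' pp, H ⟨q, pp⟩ := hcalc
  have hfinal : ‖x s‖ * ‖y‖ ≤ ‖x - d‖ * ‖y‖ := by
    have hL : Summable fun q : S => ‖x s‖ * ‖y q‖ := hys.mul_left _
    have hRs : Summable fun q : S =>
        ∑' pp : {pp : S × S // pp.1 * pp.2 = s * q}, H ⟨q, pp⟩ := hHsum.sigma
    have hle := Summable.tsum_le_tsum hkey hL hRs
    have heq : ∑' (q : S), ∑' pp : {pp : S × S // pp.1 * pp.2 = s * q}, H ⟨q, pp⟩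
        = ∑' a, H a := (Summable.tsum_sigma' (fun q => hHq q) hHsum).symm
    have heq2 : ∑' q : S, ‖x s‖ * ‖y q‖ = ‖x s‖ * ‖y‖ := by
      rw [tsum_mul_left, ← l1_norm_eq_tsum]
    linarith
  have hy0 : y = 0 := by
    have : ‖y‖ = 0 := by nlinarith [norm_nonneg y, norm_nonneg (x - d)]
    exact norm_eq_zero.mp this
  subst hy0
  have h0 : l1Conv x (0 : lp (fun _ : S => 𝕜) 1) (1:S) = 0 := by
    rw [l1Conv_apply]
    simp [lp.coeFn_zero]
  rw [hxy, l1Sc_apply_self] at h0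
  exact hc h0

set_option maxHeartbeats 1000000 in
/-- If `S` is a cancellative monoid and the invertible elements of `ℓ₁(S)` (with the
convolution product) are dense, then `S` is a group.  Consequently, if `S` is not a
group then convolution in `ℓ₁(S)` is not open. -/
theorem l1_cancellative_monoid_dense_invertibles
    {𝕜 : Type*} [RCLike 𝕜] {S : Type*} [CancelMonoid S] :
    (Dense {x : lp (fun _ : S => 𝕜) 1 |
        ∃ y, l1Conv x y = l1One S 𝕜 ∧ l1Conv y x = l1One S 𝕜} →
      ∀ s : S, IsUnit s) ∧
    ((¬ ∀ s : S, IsUnit s) →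
      ¬ ∀ (x y : lp (fun _ : S => 𝕜) 1), ∀ ε > 0, ∃ δ > 0,
          Metric.ball (l1Conv x y) δ ⊆
            Set.image2 l1Conv (Metric.ball x ε) (Metric.ball y ε)) := by

  constructor
  · intro hD s
    by_contra hsu
    obtain ⟨x, hxball, y, hxy, -⟩ :=
      Metric.dense_iff.1 hD (l1Delta S 𝕜 s) (1/2) (by norm_num)
    refine l1_keyLemma (x := x) (y := y) hsu (c := (1:𝕜)) one_ne_zero ?_ ?_
    · rw [hxy]; exact l1Sc_one.symm
    · have hb := Metric.mem_ball.mp hxball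
      rwa [dist_eq_norm] at hb
  · intro hns hopen
    obtain ⟨s₀, hs₀⟩ := not_forall.mp hns
    obtain ⟨δ, hδ, hball⟩ := hopen (l1Delta S 𝕜 s₀) 0 (1/4) (by norm_num)
    set c : 𝕜 := ((δ/2 : ℝ) : 𝕜) with hc
    have hcn : ‖c‖ = δ/2 := by
      rw [hc, RCLike.norm_ofReal]
      exact abs_of_pos (by linarith)
    have hc0 : c ≠ 0 := RCLike.ofReal_ne_zero.mpr (by linarith)
    have hzero : l1Conv (l1Delta S 𝕜 s₀) (0 : lp (fun _ : S => 𝕜) 1) = 0 := by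
      apply lp.ext
      funext t
      rw [l1Conv_apply]
      simp [lp.coeFn_zero]
    have hz : l1Sc S 𝕜 c ∈ Metric.ball (l1Conv (l1Delta S 𝕜 s₀) (0 : lp (fun _ : S => 𝕜) 1)) δ := by
      rw [Metric.mem_ball, dist_eq_norm, hzero, sub_zero, l1Sc_norm, hcn]
      linarith
    obtain ⟨u, hu, v, hv, huv⟩ := hball hz
    refine l1_keyLemma hs₀ hc0 huv ?_
    have hb := Metric.mem_ball.mp hu
    rw [dist_eq_norm] at hb
    linarith
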